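/- Let μ > 0 and define W(x,y) = (μ/2)(x² + y² + 1/(x²y²) − 3) on the open positive quadrant {(x,y) ∈ ℝ² : x > 0, y > 0}. Then W is strictly convex on this set. -/

import Mathlib

open Real Set

lemma quadrant_convex : Convex ℝ {p : ℝ × ℝ | 0 < p.1 ∧ 0 < p.2} := by
  have : {p : ℝ × ℝ | 0 < p.1 ∧ 0 < p.2} = (Ioi (0:ℝ)) ×ˢ (Ioi (0:ℝ)) := by
    ext p; simp [Set.mem_prod, mem_Ioi]
  rw [this]
  exact (convex_Ioi 0).prod (convex_Ioi 0)

lemma inv_sq_sq_eq_exp {x y : ℝ} (hx : 0 < x) (hy : 0 < y) :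
    1 / (x ^ 2 * y ^ 2) = Real.exp (-(2 * Real.log x) + -(2 * Real.log y)) := by
  have h2x : (2:ℝ) * Real.log x = (2:ℕ) * Real.log x := by norm_num
  have h2y : (2:ℝ) * Real.log y = (2:ℕ) * Real.log y := by norm_num
  rw [Real.exp_add, Real.exp_neg, Real.exp_neg, h2x, h2y, Real.exp_nat_mul,
    Real.exp_nat_mul, Real.exp_log hx, Real.exp_log hy]
  field_simp

lemma aux_convexOn :
    ConvexOn ℝ {p : ℝ × ℝ | 0 < p.1 ∧ 0 < p.2}
      (fun p : ℝ × ℝ => 1 / (p.1 ^ 2 * p.2 ^ 2)) := by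
  refine ⟨quadrant_convex, ?_⟩
  rintro p ⟨hp1, hp2⟩ q ⟨hq1, hq2⟩ a b ha hb hab
  have hu1 : 0 < a * p.1 + b * q.1 := by
    rcases eq_or_lt_of_le ha with h | h
    · simp [← h] at hab ⊢; nlinarith
    · nlinarith
  have hu2 : 0 < a * p.2 + b * q.2 := by
    rcases eq_or_lt_of_le ha with h | h
    · simp [← h] at hab ⊢; nlinarith
    · nlinarith
  have hsmul1 : (a • p + b • q).1 = a * p.1 + b * q.1 := rfl
  have hsmul2 : (a • p + b • q).2 = a * p.2 + b * q.2 := rfl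
  have hlog1 := (strictConcaveOn_log_Ioi.concaveOn).2 (mem_Ioi.2 hp1) (mem_Ioi.2 hq1) ha hb hab
  have hlog2 := (strictConcaveOn_log_Ioi.concaveOn).2 (mem_Ioi.2 hp2) (mem_Ioi.2 hq2) ha hb hab
  simp only [smul_eq_mul] at hlog1 hlog2
  set Lp := -(2 * Real.log p.1) + -(2 * Real.log p.2) with hLp
  set Lq := -(2 * Real.log q.1) + -(2 * Real.log q.2) with hLq
  have hL : -(2 * Real.log (a * p.1 + b * q.1)) + -(2 * Real.log (a * p.2 + b * q.2))
      ≤ a * Lp + b * Lq := by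
    rw [hLp, hLq]; nlinarith
  have hexp := convexOn_exp.2 (mem_univ Lp) (mem_univ Lq) ha hb hab
  simp only [smul_eq_mul] at hexp
  calc (fun p : ℝ × ℝ => 1 / (p.1 ^ 2 * p.2 ^ 2)) (a • p + b • q)
      = Real.exp (-(2 * Real.log (a * p.1 + b * q.1)) + -(2 * Real.log (a * p.2 + b * q.2))) := by
        simp only [hsmul1, hsmul2]; exact inv_sq_sq_eq_exp hu1 hu2
    _ ≤ Real.exp (a * Lp + b * Lq) := Real.exp_le_exp.2 hL
    _ ≤ a * Real.exp Lp + b * Real.exp Lq := hexp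
    _ = a • (1 / (p.1 ^ 2 * p.2 ^ 2)) + b • (1 / (q.1 ^ 2 * q.2 ^ 2)) := by
        rw [inv_sq_sq_eq_exp hp1 hp2, inv_sq_sq_eq_exp hq1 hq2]; simp [smul_eq_mul]; rfl

lemma aux_strictConvexOn :
    StrictConvexOn ℝ {p : ℝ × ℝ | 0 < p.1 ∧ 0 < p.2}
      (fun p : ℝ × ℝ => p.1 ^ 2 + p.2 ^ 2) := by
  refine ⟨quadrant_convex, ?_⟩
  rintro p hp q hq hpq a b ha hb hab
  have hab' : 0 < a * b := mul_pos ha hb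
  have hne : p.1 ≠ q.1 ∨ p.2 ≠ q.2 := by
    by_contra h
    push_neg at h
    exact hpq (Prod.ext h.1 h.2)
  have hsq : 0 < (p.1 - q.1) ^ 2 + (p.2 - q.2) ^ 2 := by
    rcases hne with h | h
    · have : 0 < (p.1 - q.1) ^ 2 := pow_two_pos_of_ne_zero (sub_ne_zero.2 h)
      nlinarith [sq_nonneg (p.2 - q.2)]
    · have : 0 < (p.2 - q.2) ^ 2 := pow_two_pos_of_ne_zero (sub_ne_zero.2 h)
      nlinarith [sq_nonneg (p.1 - q.1)]
  have h1 : (a • p + b • q).1 = a * p.1 + b * q.1 := rfl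
  have h2 : (a • p + b • q).2 = a * p.2 + b * q.2 := rfl
  simp only [h1, h2, smul_eq_mul]
  nlinarith [sq_nonneg (p.1 - q.1), sq_nonneg (p.2 - q.2)]

/-- The constrained Neo-Hookean strain energy
`W(x,y) = (μ/2)(x² + y² + 1/(x²y²) − 3)` with shear modulus `μ > 0` is strictly
convex on the open positive quadrant `{(x,y) : x > 0, y > 0}`. -/
theorem neoHookean_strictConvexOn
    (μ : ℝ) (hμ : 0 < μ) :
    StrictConvexOn ℝ {p : ℝ × ℝ | 0 < p.1 ∧ 0 < p.2}
      (fun p : ℝ × ℝ => μ / 2 * (p.1 ^ 2 + p.2 ^ 2 + 1 / (p.1 ^ 2 * p.2 ^ 2) - 3)) := by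
  have h := aux_strictConvexOn.add_convexOn aux_convexOn
  refine ⟨quadrant_convex, ?_⟩
  intro p hp q hq hpq a b ha hb hab
  have key := h.2 hp hq hpq ha hb hab
  simp only [Pi.add_apply, smul_eq_mul] at key ⊢
  have hμ2 : 0 < μ / 2 := by linarith
  nlinarith [key, hμ2]
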